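/- Let L be a distributive meet semi-lattice with top. Then φ(a ⊓ b) = φ(a) ∩ φ(b) for all a, b ∈ L, and a ≤ b if and only if φ(a) ⊆ φ(b); in particular φ is an injective meet-semilattice homomorphism, so L is isomorphic to the meet semi-lattice ⟨{φ(a) : a ∈ L}, ∩⟩. -/

import Mathlib

/-- A filter of a meet semi-lattice: a nonempty upper set closed under meets. -/
def IsSLFilter {L : Type*} [SemilatticeInf L] (F : Set L) : Prop :=
  F.Nonempty ∧ (∀ a b : L, a ∈ F → a ≤ b → b ∈ F) ∧
    (∀ a b : L, a ∈ F → b ∈ F → a ⊓ b ∈ F)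

/-- A prime (meet-prime) filter of a meet semi-lattice. -/
def IsSLPrimeFilter {L : Type*} [SemilatticeInf L] (F : Set L) : Prop :=
  IsSLFilter F ∧ F ≠ Set.univ ∧
    ∀ F₁ F₂ : Set L, IsSLFilter F₁ → IsSLFilter F₂ → F₁ ∩ F₂ ⊆ F → F₁ ⊆ F ∨ F₂ ⊆ F

/-- An ideal of a meet semi-lattice: a nonempty lower set in which any two
elements have a common upper bound lying in the ideal. -/
def IsSLIdeal {L : Type*} [SemilatticeInf L] (I : Set L) : Prop :=
  I.Nonempty ∧ (∀ a b : L, a ∈ I → b ≤ a → b ∈ I) ∧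
    (∀ a b : L, a ∈ I → b ∈ I → ∃ c ∈ I, a ≤ c ∧ b ≤ c)

/-- A meet semi-lattice is distributive. -/
def IsDistribSL (L : Type*) [SemilatticeInf L] : Prop :=
  ∀ a b₁ b₂ : L, b₁ ⊓ b₂ ≤ a → ∃ c₁ c₂ : L, b₁ ≤ c₁ ∧ b₂ ≤ c₂ ∧ a = c₁ ⊓ c₂

/-- A Frink ideal of a meet semi-lattice. -/
def IsFrinkIdeal {L : Type*} [SemilatticeInf L] (I : Set L) : Prop :=
  I.Nonempty ∧ ∀ A : Finset L, A.Nonempty → ↑A ⊆ I →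
    ∀ c : L, (⋂ a ∈ A, Set.Ici a) ⊆ Set.Ici c → c ∈ I

/-- An optimal filter: a filter whose complement is a Frink ideal. -/
def IsOptimalFilter {L : Type*} [SemilatticeInf L] (F : Set L) : Prop :=
  IsSLFilter F ∧ IsFrinkIdeal Fᶜ

/-- σ(a): the set of prime filters containing `a`. -/
def sigmaSet {L : Type*} [SemilatticeInf L] (a : L) : Set (Set L) :=
  {P | IsSLPrimeFilter P ∧ a ∈ P}

/-- φ(a): the set of optimal filters containing `a`. -/
def phiSet {L : Type*} [SemilatticeInf L] (a : L) : Set (Set L) :=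
  {F | IsOptimalFilter F ∧ a ∈ F}

section aux
variable {L : Type*} [SemilatticeInf L]

lemma phi_key (hd : IsDistribSL L) (y b : L) :
    ∀ (S : Finset L) (hS : S.Nonempty), (∀ z ∈ S, y ⊓ z ≤ b) →
      ∃ q, (∀ z ∈ S, z ≤ q) ∧ y ⊓ q ≤ b := by
  intro S hS
  induction hS using Finset.Nonempty.cons_induction with
  | singleton z =>
    intro h
    obtain ⟨p, q, hyp, hzq, hb⟩ := hd b y z (h z (by simp))
    exact ⟨q, by simpa using hzq, hb ▸ inf_le_inf hyp le_rfl⟩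
  | cons z S hz hS ih =>
    intro h
    obtain ⟨q', hq', hyq'⟩ := ih (fun w hw => h w (Finset.mem_cons_of_mem hw))
    obtain ⟨p, q, hyp, hq'q, hb⟩ := hd b y q' hyq'
    have hyz : y ⊓ z ≤ q := le_trans (h z (Finset.mem_cons_self z S)) (hb ▸ inf_le_right)
    obtain ⟨p₂, q₂, hyp₂, hzq₂, hq⟩ := hd q y z hyz
    refine ⟨q₂, ?_, ?_⟩
    · intro w hw
      rcases Finset.mem_cons.mp hw with rfl | hw
      · exact hzq₂
      · exact (hq' w hw).trans (hq'q.trans (hq ▸ inf_le_right))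
    · calc y ⊓ q₂ ≤ p ⊓ (p₂ ⊓ q₂) :=
            le_inf (inf_le_left.trans hyp) (le_inf (inf_le_left.trans hyp₂) inf_le_right)
        _ = p ⊓ q := by rw [hq]
        _ = b := hb.symm

lemma filter_inf' {F : Set L} (hF : IsSLFilter F) {ι : Type*} (A : Finset ι)
    (hA : A.Nonempty) (f : ι → L) (h : ∀ i ∈ A, f i ∈ F) : A.inf' hA f ∈ F := by
  induction hA using Finset.Nonempty.cons_induction with
  | singleton z => simpa using h z (by simp)
  | cons z T hzT hT ih =>
    rw [Finset.inf'_cons hT]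
    exact hF.2.2 _ _ (h z (Finset.mem_cons_self z T))
      (ih (fun x hx => h x (Finset.mem_cons_of_mem hx)))

lemma phi_sep [OrderTop L] (hd : IsDistribSL L) {a b : L} (hab : ¬ a ≤ b) :
    ∃ F : Set L, IsOptimalFilter F ∧ a ∈ F ∧ b ∉ F := by
  classical
  set S : Set (Set L) := {F | IsSLFilter F ∧ a ∈ F ∧ b ∉ F} with hSdef
  have hIci : Set.Ici a ∈ S :=
    ⟨⟨⟨a, le_rfl⟩, fun x y hx hxy => le_trans hx hxy, fun x y hx hy => le_inf hx hy⟩,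
      le_rfl, hab⟩
  have hchainS : ∀ c ⊆ S, IsChain (· ⊆ ·) c → c.Nonempty → ∃ ub ∈ S, ∀ s ∈ c, s ⊆ ub := by
    intro c hcS hchain hcne
    refine ⟨⋃₀ c, ⟨⟨?_, ?_, ?_⟩, ?_, ?_⟩, fun s hs => Set.subset_sUnion_of_mem hs⟩
    · obtain ⟨F, hF⟩ := hcne
      exact ⟨a, Set.mem_sUnion.mpr ⟨F, hF, (hcS hF).2.1⟩⟩
    · rintro u v ⟨F, hF, huF⟩ huv
      exact ⟨F, hF, (hcS hF).1.2.1 u v huF huv⟩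
    · rintro u v ⟨F₁, hF₁, hu⟩ ⟨F₂, hF₂, hv⟩
      rcases hchain.total hF₁ hF₂ with h | h
      · exact ⟨F₂, hF₂, (hcS hF₂).1.2.2 u v (h hu) hv⟩
      · exact ⟨F₁, hF₁, (hcS hF₁).1.2.2 u v hu (h hv)⟩
    · obtain ⟨F, hF⟩ := hcne
      exact ⟨F, hF, (hcS hF).2.1⟩
    · rintro ⟨F, hF, hbF⟩
      exact (hcS hF).2.2 hbF
  obtain ⟨G, -, hGS, hmax⟩ := zorn_subset_nonempty S hchainS _ hIci
  · obtain ⟨hGfil, haG, hbG⟩ := hGS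
    -- maximality consequence
    have hstep : ∀ x : L, x ∉ G → ∃ g ∈ G, g ⊓ x ≤ b := by
      intro x hx
      set G' : Set L := {v | ∃ g ∈ G, g ⊓ x ≤ v} with hG'def
      have hGG' : G ⊆ G' := fun g hg => ⟨g, hg, inf_le_left⟩
      have hxG' : x ∈ G' := ⟨a, haG, inf_le_right⟩
      have hG'fil : IsSLFilter G' := by
        refine ⟨⟨x, hxG'⟩, ?_, ?_⟩
        · rintro u v ⟨g, hg, hgu⟩ huv; exact ⟨g, hg, hgu.trans huv⟩
        · rintro u v ⟨g₁, hg₁, h₁⟩ ⟨g₂, hg₂, h₂⟩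
          exact ⟨g₁ ⊓ g₂, hGfil.2.2 _ _ hg₁ hg₂,
            le_inf ((inf_le_inf inf_le_left le_rfl).trans h₁)
              ((inf_le_inf inf_le_right le_rfl).trans h₂)⟩
      by_cases hbG' : b ∈ G'
      · exact hbG'
      · have : G' = G := le_antisymm (hmax ⟨hG'fil, hGG' haG, hbG'⟩ hGG') hGG'
        exact absurd (this ▸ hxG') hx
    refine ⟨G, ⟨hGfil, ⟨b, hbG⟩, ?_⟩, haG, hbG⟩
    intro A hA hAG c hc
    intro hcG'
    have hxb : ∀ x ∈ A, ∃ g ∈ G, g ⊓ x ≤ b := fun x hx => hstep x (hAG hx)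
    choose! gfun hgf1 hgf2 using hxb
    set g : L := A.inf' hA gfun with hgdef
    have hgG : g ∈ G := filter_inf' hGfil A hA gfun hgf1
    have hgxb : ∀ x ∈ A, g ⊓ x ≤ b := fun x hx =>
      (inf_le_inf (Finset.inf'_le _ hx) le_rfl).trans (hgf2 x hx)
    have hdist : ∀ x ∈ A, ∃ u z : L, g ≤ u ∧ x ≤ z ∧ b = u ⊓ z :=
      fun x hx => hd b g x (hgxb x hx)
    choose! ufun zfun hu hz hbx using hdist
    set y : L := A.inf' hA ufun with hydef
    have hyG : y ∈ G := by
      obtain ⟨x₀, hx₀⟩ := hA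
      exact hGfil.2.1 g y hgG (by
        rw [hydef]
        exact Finset.le_inf' _ _ (fun x hx => hu x hx))
    have hyz : ∀ w ∈ A.image zfun, y ⊓ w ≤ b := by
      intro w hw
      obtain ⟨x, hx, rfl⟩ := Finset.mem_image.mp hw
      calc y ⊓ zfun x ≤ ufun x ⊓ zfun x :=
            inf_le_inf (Finset.inf'_le _ hx) le_rfl
        _ = b := (hbx x hx).symm
    obtain ⟨q, hq1, hq2⟩ := phi_key hd y b (A.image zfun) (hA.image _) hyz
    have hcq : c ≤ q := by
      refine hc ?_
      simp only [Set.mem_iInter, Set.mem_Ici]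
      intro x hx
      exact (hz x hx).trans (hq1 _ (Finset.mem_image_of_mem _ hx))
    have : y ⊓ c ≤ b := (inf_le_inf le_rfl hcq).trans hq2
    exact hbG (hGfil.2.1 _ _ (hGfil.2.2 _ _ hyG hcG') this)

end aux

/-- φ is an injective meet-semilattice embedding. -/
theorem phi_is_embedding {L : Type*} [SemilatticeInf L] [OrderTop L]
    (hd : IsDistribSL L) :
    (∀ a b : L, phiSet (a ⊓ b) = phiSet a ∩ phiSet b) ∧
    (∀ a b : L, a ≤ b ↔ phiSet a ⊆ phiSet b) ∧
    Function.Injective (phiSet (L := L)) := by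
  have hle : ∀ a b : L, a ≤ b ↔ phiSet a ⊆ phiSet b := by
    intro a b
    constructor
    · rintro hab F ⟨hF, haF⟩
      exact ⟨hF, hF.1.2.1 a b haF hab⟩
    · intro h
      by_contra hab
      obtain ⟨F, hF, haF, hbF⟩ := phi_sep hd hab
      exact hbF (h ⟨hF, haF⟩).2
  refine ⟨?_, hle, ?_⟩
  · intro a b
    ext F
    simp only [phiSet, Set.mem_setOf_eq, Set.mem_inter_iff]
    constructor
    · rintro ⟨hF, hab⟩
      exact ⟨⟨hF, hF.1.2.1 _ _ hab inf_le_left⟩, hF, hF.1.2.1 _ _ hab inf_le_right⟩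
    · rintro ⟨⟨hF, ha⟩, _, hb⟩
      exact ⟨hF, hF.1.2.2 _ _ ha hb⟩
  · intro a b hab
    exact le_antisymm ((hle a b).mpr hab.le) ((hle b a).mpr hab.ge)
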